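/- For every positive integer j ≥ 2 and every ε > 0, for all sufficiently large r one has D_j(C_2^r) ≥ (1 − ε) · (j log 2 / log(j+1)) · r. -/

import Mathlib

theorem pullback {α β : Type*} [DecidableEq α] [DecidableEq β] (f : α → β) :
    ∀ (T : Multiset β) (u : Multiset α), T ≤ u.map f → ∃ t, t ≤ u ∧ t.map f = T := by
  intro T
  induction T using Multiset.induction with
  | empty => intro u _; exact ⟨0, zero_le, rfl⟩
  | cons a T ih =>
    intro u h
    have ha : a ∈ u.map f := Multiset.mem_of_le h (Multiset.mem_cons_self a T)
    obtain ⟨x, hx, rfl⟩ := Multiset.mem_map.mp ha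
    have h2 : T ≤ (u.erase x).map f := by
      have := Multiset.erase_le_erase (f x) h
      rwa [Multiset.erase_cons_head, ← Multiset.map_erase_of_mem _ _ hx] at this
    obtain ⟨t, ht, rfl⟩ := ih (u.erase x) h2
    refine ⟨x ::ₘ t, ?_, by simp⟩
    calc x ::ₘ t ≤ x ::ₘ u.erase x := Multiset.cons_le_cons x ht
    _ = u := Multiset.cons_erase hx

theorem pullbackList {α β : Type*} [DecidableEq α] [DecidableEq β] (f : α → β) :
    ∀ (L : List (Multiset β)) (u : Multiset α), L.sum ≤ u.map f →
      ∃ L' : List (Multiset α), L'.map (Multiset.map f) = L ∧ L'.sum ≤ u := by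
  intro L
  induction L with
  | nil => intro u _; exact ⟨[], rfl, zero_le⟩
  | cons T L ih =>
    intro u h
    rw [List.sum_cons] at h
    have hT : T ≤ u.map f := le_trans le_self_add h
    obtain ⟨t, htu, rfl⟩ := pullback f T u hT
    have hsplit : u = t + (u - t) := (add_tsub_cancel_of_le htu).symm
    have h2 : L.sum ≤ (u - t).map f := by
      have hmap : u.map f = t.map f + (u - t).map f := by
        conv_lhs => rw [hsplit]
        rw [Multiset.map_add]
      have : L.sum ≤ u.map f - t.map f := le_tsub_of_add_le_left h
      rwa [hmap, add_tsub_cancel_left] at this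
    obtain ⟨L', rfl, hL'⟩ := ih (u - t) h2
    refine ⟨t :: L', rfl, ?_⟩
    rw [List.sum_cons]
    conv_rhs => rw [hsplit]
    exact add_le_add_right hL' t

open Finset
open scoped Classical

variable {r n j : ℕ}

def Pgood (n r j : ℕ) (c : Fin n → Fin (j+1)) (s : Fin n → (Fin r → ZMod 2)) : Prop :=
  ∀ k : Fin j, (∃ x, c x = k.succ) ∧
    ∑ x ∈ univ.filter (fun x => c x = k.succ), s x = 0

theorem card_Ac (c : Fin n → Fin (j+1)) :
    (univ.filter (fun s : Fin n → (Fin r → ZMod 2) => Pgood n r j c s)).card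
      ≤ (2^r)^(n-j) := by
  by_cases hne : ∀ k : Fin j, ∃ x, c x = k.succ
  · choose ρ hρ using hne
    have hρinj : Function.Injective ρ := by
      intro k k' h
      have : k.succ = k'.succ := by rw [← hρ k, ← hρ k', h]
      exact Fin.succ_inj.mp this
    set S : Finset (Fin n) := Finset.image ρ univ with hS
    have hcard_compl : Fintype.card {x : Fin n // ¬ x ∈ S} = n - j := by
      rw [Fintype.card_subtype_compl, Fintype.card_fin]
      congr 1
      rw [Fintype.card_coe, hS, Finset.card_image_of_injective _ hρinj, Finset.card_univ, Fintype.card_fin]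
    have hcard_target : Fintype.card ({x : Fin n // ¬ x ∈ S} → (Fin r → ZMod 2)) = (2^r)^(n-j) := by
      rw [Fintype.card_fun, hcard_compl]
      congr 1
      simp
    rw [← hcard_target, ← Finset.card_univ]
    apply Finset.card_le_card_of_injOn
      (fun (s : Fin n → (Fin r → ZMod 2)) => fun x : {x : Fin n // ¬ x ∈ S} => s x.1)
      (fun _ _ => Finset.mem_univ _)
    intro s hs s' hs' heq
    simp only [Finset.coe_filter, Set.mem_setOf_eq] at hs hs'
    have hoff : ∀ x : Fin n, x ∉ S → s x = s' x := by
      intro x hx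
      exact congrFun heq ⟨x, hx⟩
    funext x
    by_cases hxS : x ∈ S
    · obtain ⟨k, -, rfl⟩ := Finset.mem_image.mp hxS
      have hk := (hs.2 k).2
      have hk' := (hs'.2 k).2
      set F := univ.filter (fun x => c x = k.succ) with hF
      have hρF : ρ k ∈ F := by simp [hF, hρ k]
      have hsum : s (ρ k) + ∑ x ∈ F.erase (ρ k), s x = 0 := by
        rw [Finset.add_sum_erase F s hρF]; exact hk
      have hsum' : s' (ρ k) + ∑ x ∈ F.erase (ρ k), s' x = 0 := by
        rw [Finset.add_sum_erase F s' hρF]; exact hk'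
      have hE : ∑ x ∈ F.erase (ρ k), s x = ∑ x ∈ F.erase (ρ k), s' x := by
        apply Finset.sum_congr rfl
        intro x hx
        apply hoff
        intro hxS'
        obtain ⟨k', -, hk'x⟩ := Finset.mem_image.mp hxS'
        have hxF := Finset.mem_of_mem_erase hx
        have hxne := Finset.ne_of_mem_erase hx
        simp only [hF, Finset.mem_filter] at hxF
        have : k'.succ = k.succ := by rw [← hρ k', hk'x, hxF.2]
        rw [Fin.succ_inj.mp this] at hk'x
        exact hxne hk'x.symm
      have h0 := hsum.trans hsum'.symm
      rw [hE] at h0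
      exact add_right_cancel h0
    · exact hoff x hxS
  · push_neg at hne
    obtain ⟨k, hk⟩ := hne
    convert Nat.zero_le _
    rw [Finset.card_eq_zero, Finset.filter_eq_empty_iff]
    intro s _hsu hP
    obtain ⟨x, hx⟩ := (hP k).1
    exact hk x hx

theorem exists_good_seq (hjn : j ≤ n)
    (hlt : (j+1)^n * (2^r)^(n-j) < (2^r)^n) :
    ∃ s : Fin n → (Fin r → ZMod 2), ¬ ∃ c, Pgood n r j c s := by
  set Bad : Finset (Fin n → (Fin r → ZMod 2)) :=
    univ.filter (fun s => ∃ c, Pgood n r j c s) with hBad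
  have hsub : Bad ⊆ Finset.biUnion univ
      (fun c : Fin n → Fin (j+1) => univ.filter (fun s => Pgood n r j c s)) := by
    intro s hsb
    simp only [hBad, Finset.mem_filter] at hsb
    obtain ⟨c, hc⟩ := hsb.2
    exact Finset.mem_biUnion.mpr ⟨c, Finset.mem_univ _, Finset.mem_filter.mpr ⟨Finset.mem_univ _, hc⟩⟩
  have hcard : Bad.card < Fintype.card (Fin n → (Fin r → ZMod 2)) := by
    calc Bad.card ≤ _ := Finset.card_le_card hsub
    _ ≤ ∑ c : Fin n → Fin (j+1), (univ.filter (fun s => Pgood n r j c s)).card :=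
        Finset.card_biUnion_le
    _ ≤ ∑ _c : Fin n → Fin (j+1), (2^r)^(n-j) :=
        Finset.sum_le_sum (fun c _ => card_Ac c)
    _ = (j+1)^n * (2^r)^(n-j) := by
        rw [Finset.sum_const, Finset.card_univ, Fintype.card_fun]
        simp [smul_eq_mul]
    _ < (2^r)^n := hlt
    _ = Fintype.card (Fin n → (Fin r → ZMod 2)) := by
        rw [Fintype.card_fun]
        simp
  by_contra hcon
  push_neg at hcon
  have hBu : Bad = univ := by
    ext s
    simp only [hBad, Finset.mem_filter, Finset.mem_univ, true_and, iff_true]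
    exact hcon s
  rw [hBu, Finset.card_univ] at hcard
  exact lt_irrefl _ hcard

theorem mem_le_sum {α : Type*} {t : Multiset α} : ∀ {l : List (Multiset α)}, t ∈ l → t ≤ l.sum := by
  intro l
  induction l with
  | nil => intro h; simp at h
  | cons a l ih =>
    intro h
    rcases List.mem_cons.mp h with rfl | h
    · simpa using le_self_add
    · exact le_trans (ih h) (by simpa using le_add_self)

theorem pair_le_sum {α : Type*} :
    ∀ (l : List (Multiset α)) (k k' : ℕ) (hk : k < l.length) (hk' : k' < l.length),
      k ≠ k' → l[k] + l[k'] ≤ l.sum := by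
  intro l
  induction l with
  | nil => intro k k' hk; simp at hk
  | cons a l ih =>
    intro k k' hk hk' hne
    match k, k' with
    | 0, 0 => exact absurd rfl hne
    | 0, k'+1 =>
      simp only [List.getElem_cons_zero, List.getElem_cons_succ, List.sum_cons]
      exact add_le_add_right (mem_le_sum (List.getElem_mem _)) a
    | k+1, 0 =>
      simp only [List.getElem_cons_zero, List.getElem_cons_succ, List.sum_cons]
      rw [add_comm]
      exact add_le_add_right (mem_le_sum (List.getElem_mem _)) a
    | k+1, k'+1 =>
      have h := ih k k' (by simpa using hk) (by simpa using hk') (by omega)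
      simp only [List.getElem_cons_succ, List.sum_cons]
      exact h.trans le_add_self

theorem exists_bad_free (r n j : ℕ) (hjn : j ≤ n)
    (hlt : (j+1)^n * (2^r)^(n-j) < (2^r)^n) :
    ∃ S : Multiset (Fin r → ZMod 2), Multiset.card S = n ∧
      ¬ ∃ L : List (Multiset (Fin r → ZMod 2)), L.length = j ∧ L.sum ≤ S ∧
          ∀ T ∈ L, T ≠ 0 ∧ T.sum = 0 := by
  obtain ⟨s, hs⟩ := exists_good_seq hjn hlt
  refine ⟨Multiset.map s Finset.univ.val, by simp, ?_⟩
  rintro ⟨L, hlen, hsum, hprop⟩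
  obtain ⟨L', hmap, hle⟩ := pullbackList s L Finset.univ.val hsum
  have hlen' : L'.length = j := by rw [← hlen, ← hmap, List.length_map]
  have hnd : L'.sum.Nodup := Multiset.nodup_of_le hle Finset.univ.nodup
  have hk2 : ∀ k : Fin j, (k : ℕ) < L'.length := fun k => by rw [hlen']; exact k.2
  have hk3 : ∀ k : Fin j, (k : ℕ) < L.length := fun k => by rw [hlen]; exact k.2
  set t : Fin j → Multiset (Fin n) := fun k => L'[(k : ℕ)]'(hk2 k) with ht
  have htmap : ∀ k : Fin j, (t k).map s = L[(k : ℕ)]'(hk3 k) := by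
    intro k
    have : (L'.map (Multiset.map s))[(k : ℕ)]'(by rw [List.length_map]; exact hk2 k)
        = L[(k : ℕ)]'(hk3 k) := by
      simp only [hmap]
    rw [← this, List.getElem_map]
  have hTprop : ∀ k : Fin j, L[(k : ℕ)]'(hk3 k) ≠ 0 ∧ (L[(k : ℕ)]'(hk3 k)).sum = 0 :=
    fun k => hprop _ (List.getElem_mem _)
  have htne : ∀ k : Fin j, t k ≠ 0 := by
    intro k h0
    apply (hTprop k).1
    rw [← htmap k, h0, Multiset.map_zero]
  have htle : ∀ k : Fin j, t k ≤ L'.sum := fun k => mem_le_sum (List.getElem_mem _)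
  have htnd : ∀ k : Fin j, (t k).Nodup := fun k => Multiset.nodup_of_le (htle k) hnd
  have hdisj : ∀ k k' : Fin j, k ≠ k' → ∀ x, x ∈ t k → x ∈ t k' → False := by
    intro k k' hne x hx hx'
    have hp := pair_le_sum L' (k : ℕ) (k' : ℕ) (hk2 k) (hk2 k')
      (fun h => hne (Fin.ext h))
    have hp' : t k + t k' ≤ L'.sum := hp
    have hc := Multiset.le_iff_count.mp hp' x
    rw [Multiset.count_add] at hc
    have h1 : 1 ≤ Multiset.count x (t k) := Multiset.one_le_count_iff_mem.mpr hx
    have h1' : 1 ≤ Multiset.count x (t k') := Multiset.one_le_count_iff_mem.mpr hx'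
    have h2 : Multiset.count x L'.sum ≤ 1 := Multiset.nodup_iff_count_le_one.mp hnd x
    omega
  set c : Fin n → Fin (j+1) :=
    fun x => if h : ∃ k : Fin j, x ∈ t k then (Classical.choose h).succ else 0 with hcdef
  have hcx : ∀ (k : Fin j) (x : Fin n), x ∈ t k → c x = k.succ := by
    intro k x hx
    have h : ∃ k, x ∈ t k := ⟨k, hx⟩
    have hch : Classical.choose h = k := by
      by_contra hne
      exact hdisj _ _ hne x (Classical.choose_spec h) hx
    rw [hcdef]
    simp only [dif_pos h, hch]
  apply hs
  refine ⟨c, fun k => ⟨?_, ?_⟩⟩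
  · obtain ⟨x, hx⟩ := Multiset.exists_mem_of_ne_zero (htne k)
    exact ⟨x, hcx k x hx⟩
  · have hfil : Finset.univ.filter (fun x => c x = k.succ) = ⟨t k, htnd k⟩ := by
      ext x
      simp only [Finset.mem_filter, Finset.mem_univ, true_and, Finset.mem_mk]
      constructor
      · intro hcxk
        by_cases h : ∃ k', x ∈ t k'
        · rw [hcdef] at hcxk
          simp only [dif_pos h] at hcxk
          have := Classical.choose_spec h
          rwa [Fin.succ_inj.mp hcxk] at this
        · rw [hcdef] at hcxk
          simp only [dif_neg h] at hcxk
          exact absurd hcxk.symm (Fin.succ_ne_zero k)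
      · exact hcx k x
    rw [hfil]
    show ((t k).map s).sum = 0
    rw [htmap k]
    exact (hTprop k).2
def jDavenportSet (G : Type*) [AddCommGroup G] (j : ℕ) : Set ℕ :=
  {ℓ | ∀ S : Multiset G, ℓ ≤ Multiset.card S →
    ∃ L : List (Multiset G), L.length = j ∧ L.sum ≤ S ∧ ∀ T ∈ L, T ≠ 0 ∧ T.sum = 0}

theorem stmt14 (j : ℕ) (hj : 2 ≤ j) (ε : ℝ) (hε : 0 < ε)
    (D : ℕ → ℕ) (hD : ∀ r, IsLeast (jDavenportSet (Fin r → ZMod 2) j) (D r)) :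
    ∃ R : ℕ, ∀ r : ℕ, R ≤ r →
      (1 - ε) * ((j : ℝ) * Real.log 2 / Real.log (j + 1)) * r ≤ (D r : ℝ) := by
  set cst : ℝ := (j : ℝ) * Real.log 2 / Real.log (j + 1) with hcst
  have hlogj : 0 < Real.log ((j : ℝ) + 1) := by
    apply Real.log_pos
    have : (2 : ℝ) ≤ (j : ℝ) := by exact_mod_cast hj
    linarith
  have hcstpos : 0 < cst := by
    apply div_pos
    · have : (2 : ℝ) ≤ (j : ℝ) := by exact_mod_cast hj
      have h2 := Real.log_pos one_lt_two
      positivity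
    · exact hlogj
  by_cases hε1 : 1 - ε ≤ 0
  · refine ⟨0, fun r _ => ?_⟩
    have h1 : (1 - ε) * cst * r ≤ 0 := by
      apply mul_nonpos_of_nonpos_of_nonneg
      · exact mul_nonpos_of_nonpos_of_nonneg hε1 hcstpos.le
      · positivity
    exact h1.trans (by positivity)
  push_neg at hε1
  set δ : ℝ := 1 - ε with hδ
  refine ⟨⌈((j : ℝ) + 1) / cst⌉₊ + ⌈2 / (ε * cst)⌉₊, fun r hr => ?_⟩
  have hr1 : ((j : ℝ) + 1) / cst ≤ r := by
    calc ((j : ℝ) + 1) / cst ≤ (⌈((j : ℝ) + 1) / cst⌉₊ : ℝ) := Nat.le_ceil _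
    _ ≤ r := by exact_mod_cast le_trans (Nat.le_add_right _ _) hr
  have hr2 : 2 / (ε * cst) ≤ r := by
    calc 2 / (ε * cst) ≤ (⌈2 / (ε * cst)⌉₊ : ℝ) := Nat.le_ceil _
    _ ≤ r := by exact_mod_cast le_trans (Nat.le_add_left _ _) hr
  have hjr : (j : ℝ) + 1 ≤ cst * r := by
    rw [div_le_iff₀ hcstpos] at hr1
    linarith [hr1]
  have hεr : 2 ≤ ε * cst * r := by
    have hpos : 0 < ε * cst := by positivity
    rw [div_le_iff₀ hpos] at hr2
    linarith [hr2]
  set n : ℕ := max j ⌈δ * cst * r⌉₊ with hn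
  have hjn : j ≤ n := le_max_left _ _
  have hδcr : 0 ≤ δ * cst * r := by positivity
  have hnlt : (n : ℝ) < cst * r := by
    rw [hn]
    rcases max_cases j ⌈δ * cst * r⌉₊ with ⟨heq, -⟩ | ⟨heq, -⟩ <;> rw [heq]
    · linarith
    · have h1 : (⌈δ * cst * r⌉₊ : ℝ) ≤ δ * cst * r + 1 := (Nat.ceil_lt_add_one hδcr).le
      have : δ * cst * r = cst * r - ε * cst * r := by rw [hδ]; ring
      linarith
  -- turn into the Nat inequality
  have hpow : (j+1)^n < 2^(r*j) := by
    have hreal : ((j : ℝ) + 1)^n < (2 : ℝ)^(r*j) := by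
      rw [← Real.exp_log (x := ((j:ℝ)+1)^n) (by positivity),
          ← Real.exp_log (x := (2:ℝ)^(r*j)) (by positivity)]
      apply Real.exp_lt_exp.mpr
      rw [Real.log_pow, Real.log_pow]
      have h2 : (n : ℝ) * Real.log ((j:ℝ)+1) < (cst * r) * Real.log ((j:ℝ)+1) :=
        (mul_lt_mul_iff_left₀ hlogj).mpr hnlt
      have h3 : (cst * r) * Real.log ((j:ℝ)+1) = ((r*j : ℕ) : ℝ) * Real.log 2 := by
        rw [hcst]
        push_cast
        field_simp
      rw [h3] at h2
      exact h2
    have := hreal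
    push_cast at this
    exact_mod_cast this
  have hlt : (j+1)^n * (2^r)^(n-j) < (2^r)^n := by
    have hA : 0 < (2^r)^(n-j) := by positivity
    calc (j+1)^n * (2^r)^(n-j) < 2^(r*j) * (2^r)^(n-j) :=
          (Nat.mul_lt_mul_right hA).mpr hpow
    _ = (2^r)^n := by
        have hh : r*j + r*(n-j) = r*n := by
          rw [← Nat.mul_add, Nat.add_sub_cancel' hjn]
        rw [← pow_mul, ← pow_add, hh, pow_mul]
  obtain ⟨S, hScard, hSfree⟩ := exists_bad_free r n j hjn hlt
  have hDn : n < D r := by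
    by_contra hle
    push_neg at hle
    exact hSfree ((hD r).1 S (by rw [hScard]; exact hle))
  have hfinal : δ * cst * r ≤ (n : ℝ) := by
    rw [hn]
    calc δ * cst * r ≤ (⌈δ * cst * r⌉₊ : ℝ) := Nat.le_ceil _
    _ ≤ ((max j ⌈δ * cst * r⌉₊ : ℕ) : ℝ) := by exact_mod_cast le_max_right _ _
  calc (1 - ε) * cst * r = δ * cst * r := by rw [hδ]
  _ ≤ (n : ℝ) := hfinal
  _ ≤ (D r : ℝ) := by exact_mod_cast hDn.le
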